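/- If an infinite locally finite connected graph satisfies #B_r ≤ C r² for all r ≥ 1 (for some constant C) and d_v ≤ 6 for all v, then its isoperimetric constant α = inf_W #∂W/vol(W) over finite W equals 0. -/
import Mathlib

open SimpleGraph Finset

section Aux

variable {V : Type*} [DecidableEq V] (G : SimpleGraph V)

/-- In a connected locally finite graph, every vertex at positive distance from `o`
has a neighbor strictly closer to `o`. -/
lemma exists_closer_neighbor (hconn : G.Connected) (o v : V) (h : 1 ≤ G.dist o v) :
    ∃ u, G.Adj v u ∧ G.dist o u ≤ G.dist o v - 1 := by
  obtain ⟨p, hp⟩ := hconn.exists_walk_length_eq_dist v o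
  have hne : v ≠ o := by
    intro hvo; subst hvo; simp [SimpleGraph.dist_self] at h
  have hnil : ¬ p.Nil := SimpleGraph.Walk.not_nil_of_ne hne
  refine ⟨p.getVert 1, SimpleGraph.Walk.adj_snd hnil, ?_⟩
  have htail : p.tail.length + 1 = p.length := SimpleGraph.Walk.length_tail_add_one hnil
  have hd : G.dist (p.getVert 1) o ≤ p.tail.length := SimpleGraph.dist_le p.tail
  have hcomm : G.dist o (p.getVert 1) = G.dist (p.getVert 1) o := SimpleGraph.dist_comm
  have hcomm2 : G.dist v o = G.dist o v := SimpleGraph.dist_comm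
  omega

/-- Balls are finite in a connected locally finite graph. -/
lemma ball_finite [G.LocallyFinite] (hconn : G.Connected) (o : V) :
    ∀ n : ℕ, {v : V | G.dist o v ≤ n}.Finite := by
  intro n
  induction n with
  | zero =>
    refine Set.Finite.subset (Set.finite_singleton o) ?_
    intro v hv
    simp only [Set.mem_setOf_eq, Nat.le_zero] at hv
    simp [(hconn.dist_eq_zero_iff.mp hv).symm]
  | succ n ih =>
    refine Set.Finite.subset (ih.union (Set.Finite.biUnion ih
      (fun u _ => (G.neighborSet u).toFinite))) ?_
    intro v hv
    simp only [Set.mem_setOf_eq] at hv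
    by_cases hle : G.dist o v ≤ n
    · exact Or.inl hle
    · have h1 : 1 ≤ G.dist o v := by omega
      obtain ⟨u, hadj, hu⟩ := exists_closer_neighbor G hconn o v h1
      exact Or.inr (Set.mem_biUnion (show G.dist o u ≤ n by omega)
        (by exact hadj.symm : v ∈ G.neighborSet u))

lemma degree_pos_of_connected [Infinite V] [G.LocallyFinite] (hconn : G.Connected) (v : V) :
    0 < G.degree v := by
  obtain ⟨w, hw⟩ := exists_ne v
  obtain ⟨p⟩ := hconn.preconnected v w
  have hnil : ¬ p.Nil := SimpleGraph.Walk.not_nil_of_ne (Ne.symm hw)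
  rw [G.degree_pos_iff_exists_adj]
  exact ⟨p.getVert 1, SimpleGraph.Walk.adj_snd hnil⟩

end Aux

/-- The isoperimetric constant `α = inf_W #∂W / vol(W)` over finite nonempty `W`. -/
noncomputable def isoConst {V : Type*} [DecidableEq V] (G : SimpleGraph V)
    [DecidableRel G.Adj] [G.LocallyFinite] : ℝ :=
  sInf {r : ℝ | ∃ W : Finset V, W.Nonempty ∧
    r = (∑ v ∈ W, (((G.neighborFinset v).filter (· ∉ W)).card : ℝ)) /
        (∑ v ∈ W, (G.degree v : ℝ))}

/-- An infinite connected graph with all degrees at most 6 and quadratic volume growth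
`#B_r ≤ C r²` has vanishing isoperimetric constant. -/
theorem stmt14 {V : Type*} [Infinite V] [DecidableEq V] (G : SimpleGraph V)
    [DecidableRel G.Adj] [G.LocallyFinite] (hconn : G.Connected)
    (hdeg : ∀ v, G.degree v ≤ 6) (o : V) (C : ℝ)
    (hgrowth : ∀ r : ℕ, 1 ≤ r → (({v | G.dist o v ≤ r} : Set V).ncard : ℝ) ≤ C * r ^ 2) :
    isoConst G = 0 := by
  set S : Set ℝ := {r : ℝ | ∃ W : Finset V, W.Nonempty ∧
    r = (∑ v ∈ W, (((G.neighborFinset v).filter (· ∉ W)).card : ℝ)) /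
        (∑ v ∈ W, (G.degree v : ℝ))} with hS
  -- balls as finsets
  have hfin := ball_finite G hconn o
  set B : ℕ → Finset V := fun n => (hfin n).toFinset with hB
  have hmemB : ∀ n v, v ∈ B n ↔ G.dist o v ≤ n := by
    intro n v; simp [hB, Set.Finite.mem_toFinset]
  have hoB : ∀ n, o ∈ B n := by
    intro n; rw [hmemB]; simp [SimpleGraph.dist_self]
  have hmono : ∀ n, B n ⊆ B (n + 1) := by
    intro n v hv; rw [hmemB] at hv ⊢; omega
  have hcardB : ∀ n : ℕ, 1 ≤ n → ((B n).card : ℝ) ≤ C * n ^ 2 := by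
    intro n hn
    have := hgrowth n hn
    rwa [Set.ncard_eq_toFinset_card _ (hfin n)] at this
  have hdegpos := degree_pos_of_connected G hconn
  -- lower bound : every element of S is nonnegative
  have hlb : ∀ x ∈ S, (0:ℝ) ≤ x := by
    rintro x ⟨W, hWne, rfl⟩
    exact div_nonneg (Finset.sum_nonneg fun v _ => Nat.cast_nonneg _)
      (Finset.sum_nonneg fun v _ => Nat.cast_nonneg _)
  have hSne : S.Nonempty := by
    refine ⟨_, {o}, Finset.singleton_nonempty o, rfl⟩
  -- main step : ∀ ε > 0, ∃ x ∈ S, x ≤ ε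
  have hmain : ∀ ε : ℝ, 0 < ε → ∃ x ∈ S, x ≤ ε := by
    intro ε hε
    set δ : ℝ := ε / 6 with hδ
    have hδpos : 0 < δ := by rw [hδ]; linarith
    -- find n with small relative growth
    have hexn : ∃ n : ℕ, ((B (n+1)).card : ℝ) ≤ (1 + δ) * (B n).card := by
      by_contra hcon
      push_neg at hcon
      have hgrow : ∀ n : ℕ, (1 + δ) ^ n ≤ ((B n).card : ℝ) := by
        intro n
        induction n with
        | zero =>
          have : 1 ≤ (B 0).card := Finset.card_pos.mpr ⟨o, hoB 0⟩
          simp only [pow_zero]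
          exact_mod_cast this
        | succ n ih =>
          have h1 : (1 + δ) ^ (n + 1) = (1 + δ) * (1 + δ) ^ n := by ring
          have h2 : (1 + δ) * (1 + δ) ^ n ≤ (1 + δ) * (B n).card := by
            apply mul_le_mul_of_nonneg_left ih (by linarith)
          linarith [hcon n]
      have hC1 : (1:ℝ) ≤ C := by
        have h1 := hgrowth 1 le_rfl
        have : (1:ℝ) ≤ (({v | G.dist o v ≤ 1} : Set V).ncard : ℝ) := by
          rw [Set.ncard_eq_toFinset_card _ (hfin 1)]
          exact_mod_cast Finset.card_pos.mpr ⟨o, by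
            simp [Set.Finite.mem_toFinset, SimpleGraph.dist_self]⟩
        push_cast at h1 ⊢
        nlinarith
      have hCpos : (0:ℝ) < C := by linarith
      -- exponential beats quadratic
      set q : ℝ := 1 / (1 + δ) with hq
      have hqpos : 0 < q := by rw [hq]; exact one_div_pos.mpr (by linarith)
      have hq1 : ‖q‖ < 1 := by
        rw [Real.norm_eq_abs, abs_of_pos hqpos, hq]
        rw [div_lt_one (by linarith)]
        linarith
      have hsum : Summable (fun n : ℕ => (n : ℝ) ^ 2 * q ^ n) :=
        summable_pow_mul_geometric_of_norm_lt_one 2 hq1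
      have htend := hsum.tendsto_atTop_zero
      have hev : ∀ᶠ n : ℕ in Filter.atTop, (n : ℝ) ^ 2 * q ^ n < 1 / C :=
        htend.eventually (gt_mem_nhds (one_div_pos.mpr hCpos))
      obtain ⟨n, hlt, hn1⟩ := (hev.and (Filter.eventually_ge_atTop 1)).exists
      -- from hgrow : (1+δ)^n ≤ card B n ≤ C n²
      have h1 : (1 + δ) ^ n ≤ C * n ^ 2 := (hgrow n).trans (hcardB n hn1)
      have hppos : (0:ℝ) < (1 + δ) ^ n := pow_pos (by linarith) n
      have hqn : q ^ n = 1 / (1 + δ) ^ n := by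
        rw [hq, div_pow, one_pow]
      have h2 : (n : ℝ) ^ 2 * q ^ n < 1 / C := hlt
      rw [hqn, mul_one_div, div_lt_div_iff₀ hppos hCpos] at h2
      nlinarith [h2, h1]
    obtain ⟨n, hsmall⟩ := hexn
    -- take W = B (n+1)
    set W : Finset V := B (n + 1) with hW
    have hWne : W.Nonempty := ⟨o, hoB (n+1)⟩
    refine ⟨_, ⟨W, hWne, rfl⟩, ?_⟩
    -- numerator vanishes on B n
    have hzero : ∀ v ∈ B n, ((G.neighborFinset v).filter (· ∉ W)).card = 0 := by
      intro v hv
      rw [Finset.card_eq_zero, Finset.filter_eq_empty_iff]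
      intro u hu
      simp only [SimpleGraph.mem_neighborFinset] at hu
      simp only [not_not]
      rw [hW, hmemB]
      have hdvu : G.dist v u = 1 := SimpleGraph.dist_eq_one_iff_adj.mpr hu
      have htri : G.dist o u ≤ G.dist o v + G.dist v u := hconn.dist_triangle
      rw [hmemB] at hv
      omega
    have hnum : (∑ v ∈ W, (((G.neighborFinset v).filter (· ∉ W)).card : ℝ))
        ≤ 6 * ((W.card : ℝ) - (B n).card) := by
      have hsub : B n ⊆ W := hmono n
      have heq : (∑ v ∈ W, (((G.neighborFinset v).filter (· ∉ W)).card : ℝ))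
          = ∑ v ∈ W \ B n, (((G.neighborFinset v).filter (· ∉ W)).card : ℝ) := by
        rw [eq_comm]
        apply Finset.sum_subset (Finset.sdiff_subset)
        intro v hv hv'
        have hvB : v ∈ B n := by
          by_contra h
          exact hv' (Finset.mem_sdiff.mpr ⟨hv, h⟩)
        rw [hzero v hvB]; norm_num
      rw [heq]
      have hle : ∑ v ∈ W \ B n, (((G.neighborFinset v).filter (· ∉ W)).card : ℝ)
          ≤ ∑ v ∈ W \ B n, (6:ℝ) := by
        apply Finset.sum_le_sum
        intro v _
        have h1 : ((G.neighborFinset v).filter (· ∉ W)).card ≤ G.degree v := by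
          rw [← SimpleGraph.card_neighborFinset_eq_degree]
          exact Finset.card_filter_le _ _
        have := hdeg v
        exact_mod_cast h1.trans this
      rw [Finset.sum_const, nsmul_eq_mul] at hle
      have hcard : ((W \ B n).card : ℝ) = (W.card : ℝ) - (B n).card := by
        rw [Finset.card_sdiff_of_subset hsub]
        have := Finset.card_le_card hsub
        push_cast [Nat.cast_sub this]
        ring
      rw [hcard] at hle
      linarith
    -- denominator
    have hden : ((B n).card : ℝ) ≤ ∑ v ∈ W, (G.degree v : ℝ) := by
      calc ((B n).card : ℝ) ≤ (W.card : ℝ) := by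
            exact_mod_cast Finset.card_le_card (hmono n)
        _ = ∑ v ∈ W, (1:ℝ) := by rw [Finset.sum_const, nsmul_eq_mul]; ring
        _ ≤ ∑ v ∈ W, (G.degree v : ℝ) := by
            apply Finset.sum_le_sum
            intro v _
            exact_mod_cast (hdegpos v : 1 ≤ G.degree v)
    have hdenpos : (0:ℝ) < ∑ v ∈ W, (G.degree v : ℝ) := by
      have h1 : (0:ℝ) < ((B n).card : ℝ) := by
        exact_mod_cast Finset.card_pos.mpr ⟨o, hoB n⟩
      linarith
    rw [div_le_iff₀ hdenpos]
    have hnum2 : 6 * ((W.card : ℝ) - (B n).card) ≤ ε * (B n).card := by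
      have : (W.card : ℝ) - (B n).card ≤ δ * (B n).card := by
        rw [hW]; nlinarith [hsmall]
      rw [hδ] at this
      linarith
    have hBpos : (0:ℝ) < ((B n).card : ℝ) := by
      exact_mod_cast Finset.card_pos.mpr ⟨o, hoB n⟩
    calc (∑ v ∈ W, (((G.neighborFinset v).filter (· ∉ W)).card : ℝ))
        ≤ ε * (B n).card := hnum.trans hnum2
      _ ≤ ε * (∑ v ∈ W, (G.degree v : ℝ)) := by
          apply mul_le_mul_of_nonneg_left hden (le_of_lt hε)
  -- conclude
  have h0le : (0:ℝ) ≤ isoConst G := le_csInf hSne hlb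
  have hle0 : isoConst G ≤ 0 := by
    apply le_of_forall_pos_le_add
    intro ε hε
    obtain ⟨x, hxS, hxε⟩ := hmain ε hε
    have hbdd : BddBelow S := ⟨0, hlb⟩
    calc isoConst G ≤ x := csInf_le hbdd hxS
      _ ≤ ε := hxε
      _ = 0 + ε := by ring
  linarith
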